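/- Let n, m_a, m_b be positive integers and let A, B : Fin n → Fin n → ℤ. Suppose for each i there are sets S i 1, …, S i m_a ⊆ Fin n whose union is Fin n such that the row function k ↦ A i k is non-increasing on each S i o, and for each j there are sets T j 1, …, T j m_b ⊆ Fin n whose union is Fin n such that the column function k ↦ B k j is non-increasing on each T j r. Then for all i, j: min_{k ∈ Fin n} (A i k + B k j) = min over all pairs (o, r) with S i o ∩ T j r nonempty of (A i k* + B k* j), where k* denotes the maximum element of S i o ∩ T j r. -/
import Mathlib


theorem minplus_matrix_via_max_witnesses
    (n ma mb : ℕ) (hn : 0 < n) (hma : 0 < ma) (hmb : 0 < mb)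
    (A B : Fin n → Fin n → ℤ)
    (S : Fin n → Fin ma → Finset (Fin n))
    (T : Fin n → Fin mb → Finset (Fin n))
    (hScover : ∀ i k : Fin n, ∃ o : Fin ma, k ∈ S i o)
    (hTcover : ∀ j k : Fin n, ∃ r : Fin mb, k ∈ T j r)
    (hSmono : ∀ (i : Fin n) (o : Fin ma),
      ∀ k ∈ S i o, ∀ k' ∈ S i o, k ≤ k' → A i k ≥ A i k')
    (hTmono : ∀ (j : Fin n) (r : Fin mb),
      ∀ k ∈ T j r, ∀ k' ∈ T j r, k ≤ k' → B k j ≥ B k' j) :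
    ∀ i j : Fin n,
      ∀ hne : (Finset.univ.filter fun p : Fin ma × Fin mb =>
          (S i p.1 ∩ T j p.2).Nonempty).Nonempty,
      Finset.univ.inf' ⟨⟨0, hn⟩, Finset.mem_univ _⟩
          (fun k : Fin n => A i k + B k j)
        = (Finset.univ.filter fun p : Fin ma × Fin mb =>
              (S i p.1 ∩ T j p.2).Nonempty).inf' hne
            (fun p => if h : (S i p.1 ∩ T j p.2).Nonempty then
                A i ((S i p.1 ∩ T j p.2).max' h) +
                  B ((S i p.1 ∩ T j p.2).max' h) j
              else 0) := by
  intro i j hne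
  apply le_antisymm
  · -- LHS ≤ each witness value
    apply Finset.le_inf'
    intro p hp
    rw [Finset.mem_filter] at hp
    rw [dif_pos hp.2]
    exact Finset.inf'_le _ (Finset.mem_univ _)
  · -- there is a minimizer k; RHS ≤ A i k + B k j
    obtain ⟨k, -, hk⟩ := Finset.exists_mem_eq_inf' (⟨⟨0, hn⟩, Finset.mem_univ _⟩ :
      (Finset.univ : Finset (Fin n)).Nonempty) (fun k : Fin n => A i k + B k j)
    rw [hk]
    obtain ⟨o, ho⟩ := hScover i k
    obtain ⟨r, hr⟩ := hTcover j k
    have hmem : k ∈ S i o ∩ T j r := Finset.mem_inter.mpr ⟨ho, hr⟩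
    have hne2 : (S i o ∩ T j r).Nonempty := ⟨k, hmem⟩
    have hOf : (o, r) ∈ (Finset.univ.filter fun p : Fin ma × Fin mb =>
        (S i p.1 ∩ T j p.2).Nonempty) := by
      simp [hne2]
    refine le_trans (Finset.inf'_le _ hOf) ?_
    simp only [dif_pos hne2]
    set m := (S i o ∩ T j r).max' hne2 with hm
    have hmmem : m ∈ S i o ∩ T j r := Finset.max'_mem _ _
    have hkm : k ≤ m := Finset.le_max' _ _ hmem
    have h1 := hSmono i o k ho m (Finset.mem_inter.mp hmmem).1 hkm
    have h2 := hTmono j r k hr m (Finset.mem_inter.mp hmmem).2 hkm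
    omega
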